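/- Let k ≥ 4 be an integer, K := k - 3, and let φ be a satisfiable E3-CNF formula with m clauses C_1, …, C_m over variables x_1, …, x_n, with satisfying assignments α_start, α_end. Let y_1, …, y_K be K fresh variables and let ψ be the Ek-CNF formula over x_1,…,x_n,y_1,…,y_K whose clauses are C_j ∨ D for every j ∈ [m] and every clause D over y_1,…,y_K that contains each of y_1,…,y_K exactly once (positively or negatively). Define β_start (resp. β_end) as α_start (resp. α_end) extended by assigning 0 to every y_i. For any real ε > 0, if opt_φ(α_start ↔ α_end) < 1 - ε, then opt_ψ(β_start ↔ β_end) < 1 - ε/2^K. -/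

import Mathlib

/-- An assignment maps each Boolean variable to a truth value. -/
abbrev Assignment (V : Type) := V → Bool

/-- A literal is a variable together with a polarity (`true` = positive);
a clause is a disjunction of literals, represented as the list of its literals
(its width is the length of this list). -/
abbrev Clause (V : Type) := List (V × Bool)

/-- A CNF formula is a conjunction of clauses, represented as a list
(clauses are counted with multiplicity). -/
abbrev CNF (V : Type) := List (Clause V)

/-- An assignment satisfies a clause if it makes at least one literal true. -/
def satClause {V : Type} (α : Assignment V) (C : Clause V) : Bool :=
  C.any fun l => α l.1 == l.2

/-- An assignment satisfies a CNF formula if it satisfies every clause. -/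
def satCNF {V : Type} (α : Assignment V) (φ : CNF V) : Bool :=
  φ.all fun C => satClause α C

/-- The fraction of clauses of `φ` satisfied by `α`. -/
noncomputable def val {V : Type} (φ : CNF V) (α : Assignment V) : ℝ :=
  ((φ.filter fun C => satClause α C).length : ℝ) / (φ.length : ℝ)

/-- The number of clauses of `φ` violated by `α`. -/
def numViol {V : Type} (φ : CNF V) (α : Assignment V) : ℕ :=
  (φ.filter fun C => !satClause α C).length

/-- Two assignments differ on at most one variable. -/
def Adjacent {V : Type} (α β : Assignment V) : Prop :=
  ∀ v w, α v ≠ β v → α w ≠ β w → v = w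

/-- `seq` is a reconfiguration sequence from `s` to `e`: a nonempty finite sequence of
assignments starting at `s`, ending at `e`, in which consecutive assignments differ
on at most one variable. -/
def IsReconfSeq {V : Type} (s e : Assignment V) (seq : List (Assignment V)) : Prop :=
  seq ≠ [] ∧ seq.head? = some s ∧ seq.getLast? = some e ∧ seq.Chain' Adjacent

/-- The value of a reconfiguration sequence: the minimum of `val φ` over its members. -/
noncomputable def seqVal {V : Type} (φ : CNF V) (seq : List (Assignment V)) : ℝ :=
  sInf (val φ '' {α | α ∈ seq})

/-- `opt_φ(s ↔ e)`: the optimal (maximum) value over all reconfiguration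
sequences from `s` to `e`. -/
noncomputable def optVal {V : Type} (φ : CNF V) (s e : Assignment V) : ℝ :=
  sSup (seqVal φ '' {seq | IsReconfSeq s e seq})

-- auxiliary lemmas

lemma my_val_nonneg {V : Type} (φ : CNF V) (α : Assignment V) : 0 ≤ val φ α :=
  div_nonneg (by positivity) (by positivity)

lemma my_val_le_one {V : Type} (φ : CNF V) (α : Assignment V) : val φ α ≤ 1 := by
  unfold val
  rcases Nat.eq_zero_or_pos φ.length with h | h
  · simp [h]
  · rw [div_le_one (by exact_mod_cast h)]
    exact_mod_cast List.length_filter_le _ _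

lemma my_bddBelow {V : Type} (φ : CNF V) (s : Set (Assignment V)) :
    BddBelow (val φ '' s) := by
  refine ⟨0, ?_⟩
  rintro x ⟨α, -, rfl⟩
  exact my_val_nonneg φ α

lemma my_seqVal_le_val {V : Type} (φ : CNF V) (seq : List (Assignment V))
    {α : Assignment V} (h : α ∈ seq) : seqVal φ seq ≤ val φ α :=
  csInf_le (my_bddBelow φ _) ⟨α, h, rfl⟩

lemma my_seqVal_nonneg {V : Type} (φ : CNF V) (seq : List (Assignment V))
    (h : seq ≠ []) : 0 ≤ seqVal φ seq := by
  apply le_csInf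
  · exact ⟨val φ (seq.head h), seq.head h, List.head_mem h, rfl⟩
  · rintro x ⟨α, -, rfl⟩; exact my_val_nonneg φ α

lemma my_optVal_nonneg {V : Type} (φ : CNF V) (s e : Assignment V) :
    0 ≤ optVal φ s e := by
  apply Real.sSup_nonneg
  rintro x ⟨seq, hseq, rfl⟩
  exact my_seqVal_nonneg φ seq hseq.1

lemma my_seqVal_le_optVal {V : Type} (φ : CNF V) (s e : Assignment V)
    {seq : List (Assignment V)} (h : IsReconfSeq s e seq) :
    seqVal φ seq ≤ optVal φ s e := by
  apply le_csSup
  · refine ⟨1, ?_⟩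
    rintro x ⟨seq', hseq', rfl⟩
    exact le_trans (my_seqVal_le_val φ seq' (List.head_mem hseq'.1))
      (my_val_le_one φ _)
  · exact ⟨seq, h, rfl⟩

lemma any_map_inl {n K : ℕ} (β : Assignment (Fin n ⊕ Fin K)) (C : Clause (Fin n)) :
    ((C.map fun l => ((Sum.inl l.1 : Fin n ⊕ Fin K), l.2)).any fun l => β l.1 == l.2)
      = C.any fun l => β (Sum.inl l.1) == l.2 := by
  induction C with
  | nil => rfl
  | cons x xs ih => simp [ih]

/-- counting lemma for one padded clause -/
lemma count_pad {n K : ℕ} (β : Assignment (Fin n ⊕ Fin K)) (C : Clause (Fin n)) :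
    (((Finset.univ : Finset (Fin K → Bool)).toList.map fun b =>
        (C.map (fun l => ((Sum.inl l.1 : Fin n ⊕ Fin K), l.2)) ++
          List.ofFn fun i => ((Sum.inr i : Fin n ⊕ Fin K), b i))).filter
       fun D => !satClause β D).length
    = if satClause (fun v => β (Sum.inl v)) C then 0 else 1 := by
  have hmap : ∀ b : Fin K → Bool,
      satClause β (C.map (fun l => ((Sum.inl l.1 : Fin n ⊕ Fin K), l.2)) ++
        List.ofFn fun i => ((Sum.inr i : Fin n ⊕ Fin K), b i))
      = (satClause (fun v => β (Sum.inl v)) C ||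
          (List.ofFn fun i => ((Sum.inr i : Fin n ⊕ Fin K), b i)).any
            fun l => β l.1 == l.2) := by
    intro b
    simp only [satClause, List.any_append, any_map_inl]
  rw [List.filter_map, List.length_map]
  by_cases hC : satClause (fun v => β (Sum.inl v)) C
  · rw [if_pos hC]
    rw [List.filter_eq_nil_iff.2, List.length_nil]
    intro b _
    simp [Function.comp, hmap b, hC]
  · rw [if_neg hC]
    set c : (Fin K → Bool) := fun i => !β (Sum.inr i) with hc
    have hpred : ∀ b ∈ (Finset.univ : Finset (Fin K → Bool)).toList,
        (!satClause β (C.map (fun l => ((Sum.inl l.1 : Fin n ⊕ Fin K), l.2)) ++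
          List.ofFn fun i => ((Sum.inr i : Fin n ⊕ Fin K), b i))) = (b == c) := by
      intro b _
      rw [hmap b, Bool.eq_iff_iff]
      simp only [Bool.not_eq_true', Bool.or_eq_false_iff, beq_iff_eq]
      constructor
      · rintro ⟨-, hany⟩
        funext i
        rw [List.any_eq_false] at hany
        have h2 := hany (Sum.inr i, b i) (by
          rw [List.mem_ofFn]; exact ⟨i, rfl⟩)
        simp only [beq_iff_eq] at h2
        simp [hc]
        cases hβ : β (Sum.inr i) <;> cases hb : b i <;> simp_all
      · rintro rfl
        refine ⟨Bool.not_eq_true _ ▸ (by simpa using hC), ?_⟩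
        rw [← Bool.not_eq_true, List.any_eq_true]
        push_neg
        intro l hl
        rw [List.mem_ofFn] at hl
        obtain ⟨i, rfl⟩ := hl
        simp [hc]
    calc (((Finset.univ : Finset (Fin K → Bool)).toList).filter
            ((fun D => !satClause β D) ∘ fun b =>
              (C.map (fun l => ((Sum.inl l.1 : Fin n ⊕ Fin K), l.2)) ++
                List.ofFn fun i => ((Sum.inr i : Fin n ⊕ Fin K), b i)))).length
        = (((Finset.univ : Finset (Fin K → Bool)).toList).filter (· == c)).length := by
          rw [List.filter_congr (by intro b hb; exact hpred b hb)]
      _ = 1 := by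
          rw [← List.countP_eq_length_filter]
          have : ((Finset.univ : Finset (Fin K → Bool)).toList).count c = 1 :=
            List.count_eq_one_of_mem (Finset.nodup_toList _) (by simp)
          simpa [List.count] using this

lemma length_filter_sat {V : Type} (φ : CNF V) (α : Assignment V) :
    (φ.filter fun C => satClause α C).length + numViol φ α = φ.length := by
  unfold numViol
  induction φ with
  | nil => rfl
  | cons C φ ih =>
    rw [List.filter_cons, List.filter_cons]
    by_cases hC : satClause α C <;> simp [hC] <;> omega

lemma numViol_pad {n K : ℕ} (β : Assignment (Fin n ⊕ Fin K)) (φ : CNF (Fin n)) :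
    numViol (φ.flatMap fun C =>
        (Finset.univ : Finset (Fin K → Bool)).toList.map fun b =>
          C.map (fun l => (Sum.inl l.1, l.2)) ++ List.ofFn fun i => (Sum.inr i, b i)) β
      = numViol φ (fun v => β (Sum.inl v)) := by
  induction φ with
  | nil => rfl
  | cons C φ ih =>
    rw [List.flatMap_cons]
    unfold numViol at ih ⊢
    rw [List.filter_append, List.length_append, ih, List.filter_cons]
    have := count_pad β C
    by_cases hC : satClause (fun v => β (Sum.inl v)) C
    · rw [hC]
      simp only [hC, if_true] at this
      rw [this]
      simp
    · rw [Bool.not_eq_true] at hC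
      rw [hC]
      simp only [hC, Bool.false_eq_true, if_false] at this
      rw [this]
      simp [Nat.add_comm]

lemma length_pad {n K : ℕ} (φ : CNF (Fin n)) :
    (φ.flatMap fun C =>
        (Finset.univ : Finset (Fin K → Bool)).toList.map fun b =>
          C.map (fun l => ((Sum.inl l.1 : Fin n ⊕ Fin K), l.2)) ++
            List.ofFn fun i => (Sum.inr i, b i)).length = φ.length * 2 ^ K := by
  induction φ with
  | nil => simp
  | cons C φ ih =>
    rw [List.flatMap_cons, List.length_append, ih, List.length_map,
      Finset.length_toList]
    have : (Finset.univ : Finset (Fin K → Bool)).card = 2 ^ K := by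
      simp [Finset.card_univ]
    rw [this, List.length_cons]
    ring


/-- Soundness of the padding reduction from E3-SAT Reconfiguration to
Ek-SAT Reconfiguration (`k ≥ 4`, `K := k - 3`): with `ψ`, `βs`, `βe` as in the reduction,
for any real `ε > 0`, if `opt_φ(αs ↔ αe) < 1 - ε` then `opt_ψ(βs ↔ βe) < 1 - ε/2^K`. -/
theorem stmt9 {n k : ℕ} (hk : 4 ≤ k) (φ : CNF (Fin n))
    (h3 : ∀ C ∈ φ, C.length = 3)
    (αs αe : Assignment (Fin n)) (hs : satCNF αs φ) (he : satCNF αe φ)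
    (ψ : CNF (Fin n ⊕ Fin (k - 3)))
    (hψ : ψ = φ.flatMap fun C =>
        (Finset.univ : Finset (Fin (k - 3) → Bool)).toList.map fun b =>
          C.map (fun l => (Sum.inl l.1, l.2)) ++ List.ofFn fun i => (Sum.inr i, b i))
    (βs βe : Assignment (Fin n ⊕ Fin (k - 3)))
    (hβs : βs = Sum.elim αs fun _ => false)
    (hβe : βe = Sum.elim αe fun _ => false)
    (ε : ℝ) (hε : 0 < ε) :
    optVal φ αs αe < 1 - ε → optVal ψ βs βe < 1 - ε / 2 ^ (k - 3) := by
  intro hopt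
  subst hψ hβs hβe
  have hε1 : ε < 1 := by
    have := my_optVal_nonneg φ αs αe
    linarith
  have h2K : (0:ℝ) < 2 ^ (k - 3) := by positivity
  have h2K1 : (1:ℝ) ≤ 2 ^ (k - 3) := one_le_pow₀ (by norm_num)
  rcases Nat.eq_zero_or_pos φ.length with hm | hm
  · -- empty formula
    have hφ : φ = [] := List.length_eq_zero_iff.1 hm
    subst hφ
    have hlt : (0:ℝ) < 1 - ε / 2 ^ (k - 3) := by
      have h1 : ε / 2 ^ (k - 3) ≤ ε := div_le_self hε.le h2K1
      linarith
    refine lt_of_le_of_lt ?_ hlt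
    apply Real.sSup_le _ le_rfl
    rintro x ⟨seq, hseq, rfl⟩
    refine le_trans (my_seqVal_le_val _ _ (List.head_mem hseq.1)) ?_
    simp [val]
  · -- nonempty formula
    set m := φ.length with hmdef
    set t : ℕ := Nat.floor (ε * m) + 1 with ht
    have hmR : (0:ℝ) < m := by exact_mod_cast hm
    have htgt : ε * m < t := by
      have := Nat.lt_floor_add_one (ε * m)
      rw [ht]
      push_cast
      linarith
    have htle : t ≤ m := by
      have h1 : ε * m < m := by nlinarith
      have h2 : Nat.floor (ε * m) < m := (Nat.floor_lt (by positivity)).2 h1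
      omega
    have hMpos : (0:ℝ) < m * 2 ^ (k - 3) := by positivity
    set B : ℝ := 1 - t / (m * 2 ^ (k - 3)) with hB
    have hB0 : 0 ≤ B := by
      rw [hB]
      have h1 : (t:ℝ) ≤ m * 2 ^ (k - 3) := by
        calc (t:ℝ) ≤ m := by exact_mod_cast htle
          _ ≤ m * 2 ^ (k - 3) := by nlinarith
      have := div_le_one_of_le₀ h1 hMpos.le
      linarith
    have hBlt : B < 1 - ε / 2 ^ (k - 3) := by
      rw [hB]
      have heq : ε / 2 ^ (k - 3) = (ε * m) / (m * 2 ^ (k - 3)) := by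
        field_simp
      rw [heq]
      have h2 : (ε * m) / (m * 2 ^ (k - 3)) < t / (m * 2 ^ (k - 3)) := by
        gcongr
      linarith
    refine lt_of_le_of_lt ?_ hBlt
    apply Real.sSup_le _ hB0
    rintro x ⟨seq, hseq, rfl⟩
    obtain ⟨hne, hhead, hlast, hchain⟩ := hseq
    set g : Assignment (Fin n ⊕ Fin (k - 3)) → Assignment (Fin n) :=
      fun β => fun v => β (Sum.inl v) with hg
    have hrc : IsReconfSeq αs αe (seq.map g) := by
      refine ⟨by simp [hne], ?_, ?_, ?_⟩
      · rw [List.head?_map, hhead]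
        rfl
      · rw [List.getLast?_map, hlast]
        rfl
      · exact List.isChain_map_of_isChain g
          (fun a b hab v w hv hw => Sum.inl_injective (hab (Sum.inl v) (Sum.inl w) hv hw)) hchain
    have h1 : seqVal φ (seq.map g) ≤ optVal φ αs αe := my_seqVal_le_optVal φ αs αe hrc
    have h2 : ∃ α ∈ seq.map g, val φ α < 1 - ε := by
      by_contra hcon
      push_neg at hcon
      have hub : 1 - ε ≤ seqVal φ (seq.map g) := by
        apply le_csInf
        · exact ⟨val φ ((seq.map g).head (by simp [hne])), _,
            List.head_mem _, rfl⟩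
        · rintro y ⟨α, hα, rfl⟩
          exact hcon α hα
      linarith
    obtain ⟨α, hαmem, hαval⟩ := h2
    obtain ⟨β, hβmem, hβα⟩ := List.mem_map.1 hαmem
    have hnum : t ≤ numViol φ α := by
      have hsum := length_filter_sat φ α
      have hsat : ((φ.filter fun C => satClause α C).length : ℝ) < (1 - ε) * m := by
        rw [val, div_lt_iff₀ hmR] at hαval
        exact hαval
      have hv : ε * m < (numViol φ α : ℝ) := by
        have : ((φ.filter fun C => satClause α C).length : ℝ) + numViol φ α = m := by
          exact_mod_cast hsum
        nlinarith
      have h3 : Nat.floor (ε * m) < numViol φ α := (Nat.floor_lt (by positivity)).2 hv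
      omega
    have hviol : numViol (φ.flatMap fun C =>
        (Finset.univ : Finset (Fin (k - 3) → Bool)).toList.map fun b =>
          C.map (fun l => (Sum.inl l.1, l.2)) ++ List.ofFn fun i => (Sum.inr i, b i)) β
        = numViol φ α := by
      have hga : (fun v => β (Sum.inl v)) = α := hβα
      rw [numViol_pad β φ, hga]
    have hvt : (t:ℝ) ≤ (numViol φ α : ℝ) := by exact_mod_cast hnum
    have hvalψ : val (φ.flatMap fun C =>
        (Finset.univ : Finset (Fin (k - 3) → Bool)).toList.map fun b =>
          C.map (fun l => (Sum.inl l.1, l.2)) ++ List.ofFn fun i => (Sum.inr i, b i)) β ≤ B := by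
      have hlen := length_pad (K := k - 3) φ
      have hsum := length_filter_sat (φ.flatMap fun C =>
        (Finset.univ : Finset (Fin (k - 3) → Bool)).toList.map fun b =>
          C.map (fun l => (Sum.inl l.1, l.2)) ++ List.ofFn fun i => (Sum.inr i, b i)) β
      rw [hlen, hviol] at hsum
      have hfl' : ((((φ.flatMap fun C =>
          (Finset.univ : Finset (Fin (k - 3) → Bool)).toList.map fun b =>
            C.map (fun l => (Sum.inl l.1, l.2)) ++ List.ofFn fun i => (Sum.inr i, b i)).filter
            fun C => satClause β C).length : ℝ))
          = (m:ℝ) * 2 ^ (k - 3) - (numViol φ α : ℝ) := by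
        have h' : ((((φ.flatMap fun C =>
            (Finset.univ : Finset (Fin (k - 3) → Bool)).toList.map fun b =>
              C.map (fun l => (Sum.inl l.1, l.2)) ++ List.ofFn fun i => (Sum.inr i, b i)).filter
              fun C => satClause β C).length : ℝ)) + (numViol φ α : ℝ)
            = ((m * 2 ^ (k - 3) : ℕ) : ℝ) := by exact_mod_cast hsum
        push_cast at h'
        linarith
      rw [val, hlen, hfl']
      have hden : ((φ.length * 2 ^ (k - 3) : ℕ) : ℝ) = (m:ℝ) * 2 ^ (k - 3) := by
        rw [← hmdef]; push_cast; ring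
      rw [hden, hB, sub_div, div_self hMpos.ne']
      gcongr
    exact le_trans (my_seqVal_le_val _ _ hβmem) hvalψ
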